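/- Let G be a finite non-cyclic abelian group. Then the power graph P(G) is not a line graph: there is no graph Γ such that P(G) is isomorphic to the line graph of Γ. -/

import Mathlib

/-- The power graph of a group `G`: distinct `x, y` are adjacent iff one is a positive
integer power of the other. -/
def powerGraph (G : Type) [Group G] : SimpleGraph G where
  Adj x y := x ≠ y ∧ ((∃ n : ℕ, 0 < n ∧ y ^ n = x) ∨ (∃ n : ℕ, 0 < n ∧ x ^ n = y))
  symm := by
    constructor
    rintro x y ⟨hxy, h⟩
    exact ⟨hxy.symm, h.symm⟩
  loopless := by
    constructor
    rintro x ⟨h, -⟩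
    exact h rfl

/-- A vertex is dominating if it is adjacent to every other vertex. -/
def SimpleGraph.IsDominatingVertex {V : Type} (H : SimpleGraph V) (v : V) : Prop :=
  ∀ u, u ≠ v → H.Adj v u

/-- The proper power graph: the induced subgraph of the power graph on the
set of non-dominating vertices. -/
def properPowerGraph (G : Type) [Group G] :=
  (powerGraph G).induce {x : G | ¬ (powerGraph G).IsDominatingVertex x}

/-- A graph is a line graph if it is isomorphic to the line graph of some graph. -/
def IsLineGraph {V : Type} (H : SimpleGraph V) : Prop :=
  ∃ (W : Type) (Γ : SimpleGraph W), Nonempty (H ≃g Γ.lineGraph)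


open Subgroup

/-- Line graphs are claw-free. -/
lemma lineGraph_no_claw {W : Type} (Γ : SimpleGraph W) (e0 e1 e2 e3 : Γ.edgeSet)
    (h1 : Γ.lineGraph.Adj e0 e1) (h2 : Γ.lineGraph.Adj e0 e2) (h3 : Γ.lineGraph.Adj e0 e3)
    (h12 : ¬ Γ.lineGraph.Adj e1 e2) (h13 : ¬ Γ.lineGraph.Adj e1 e3)
    (h23 : ¬ Γ.lineGraph.Adj e2 e3)
    (n12 : e1 ≠ e2) (n13 : e1 ≠ e3) (n23 : e2 ≠ e3) : False := by
  rw [SimpleGraph.lineGraph_adj_iff_exists] at h1 h2 h3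
  obtain ⟨-, w1, hw1e, hw1⟩ := h1
  obtain ⟨-, w2, hw2e, hw2⟩ := h2
  obtain ⟨-, w3, hw3e, hw3⟩ := h3
  rw [SimpleGraph.lineGraph_adj_iff_exists] at h12 h13 h23
  push_neg at h12 h13 h23
  obtain ⟨u, v, huv⟩ : ∃ u v, ((e0 : Sym2 W)) = s(u, v) :=
    Sym2.inductionOn (e0 : Sym2 W) (fun x y => ⟨x, y, rfl⟩)
  rw [huv, Sym2.mem_iff] at hw1e hw2e hw3e
  rcases hw1e with rfl | rfl <;> rcases hw2e with rfl | rfl <;> rcases hw3e with rfl | rfl <;>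
    first
      | exact h12 n12 _ hw1 hw2
      | exact h13 n13 _ hw1 hw3
      | exact h23 n23 _ hw2 hw3

lemma mem_zpowers_of_adj {G : Type} [Group G] {x y : G}
    (h : (powerGraph G).Adj x y) : x ∈ zpowers y ∨ y ∈ zpowers x := by
  obtain ⟨-, ⟨n, -, hn⟩ | ⟨n, -, hn⟩⟩ := h
  · exact Or.inl ⟨n, by simpa using hn⟩
  · exact Or.inr ⟨n, by simpa using hn⟩

theorem powerGraph_not_isLineGraph_of_noncyclic_abelian (G : Type) [CommGroup G] [Finite G]
    (hnc : ¬ IsCyclic G) :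
    ¬ IsLineGraph (powerGraph G) := by
  rintro ⟨W, Γ, ⟨φ⟩⟩
  -- pick g of maximal order (= exponent)
  obtain ⟨g, hg⟩ := Monoid.exists_orderOf_eq_exponent (G := G)
    (Monoid.ExponentExists.of_finite)
  have hmax : ∀ x : G, orderOf x ≤ orderOf g := fun x => by
    rw [hg]
    exact Nat.le_of_dvd (Nat.pos_of_ne_zero Monoid.exponent_ne_zero_of_finite)
      (Monoid.order_dvd_exponent x)
  -- pick h outside ⟨g⟩
  have : ¬ ∀ x : G, x ∈ zpowers g := fun hx => hnc ⟨g, hx⟩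
  push_neg at this
  obtain ⟨h, hh⟩ := this
  -- key: any cyclic subgroup containing g equals ⟨g⟩
  have key : ∀ c : G, g ∈ zpowers c → zpowers c = zpowers g := by
    intro c hc
    refine (Subgroup.eq_of_le_of_card_ge ((zpowers_le).2 hc) ?_).symm
    rw [Nat.card_zpowers, Nat.card_zpowers]
    exact hmax c
  have hne1 : h ≠ 1 := fun e => hh (e ▸ (zpowers g).one_mem)
  have hgne1 : g ≠ 1 := by
    intro e
    have : orderOf h ≤ 1 := by simpa [e] using hmax h
    exact hne1 (orderOf_eq_one_iff.1 (le_antisymm this (orderOf_pos h)))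
  have hghne1 : g * h ≠ 1 := by
    intro e
    have : h = g⁻¹ := eq_inv_of_mul_eq_one_right e
    exact hh (this ▸ (zpowers g).inv_mem (mem_zpowers g))
  -- the six non-memberships
  have m1 : h ∉ zpowers g := hh
  have m2 : g ∉ zpowers h := fun hc => hh ((key h hc) ▸ mem_zpowers h)
  have m3 : g * h ∉ zpowers g := fun hc => hh (by
    have := (zpowers g).mul_mem ((zpowers g).inv_mem (mem_zpowers g)) hc
    simpa using this)
  have m4 : g * h ∉ zpowers h := fun hc => m2 (by
    have := (zpowers h).mul_mem hc ((zpowers h).inv_mem (mem_zpowers h))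
    simpa using this)
  have m5 : g ∉ zpowers (g * h) := fun hc => m3 ((key _ hc) ▸ mem_zpowers _)
  have m6 : h ∉ zpowers (g * h) := fun hc => m5 (by
    have := (zpowers (g*h)).mul_mem (mem_zpowers (g*h)) ((zpowers (g*h)).inv_mem hc)
    simpa using this)
  -- distinctness
  have d12 : g ≠ h := fun e => m1 (e ▸ mem_zpowers g)
  have d13 : g ≠ g * h := fun e => hne1 ((by simpa using congrArg (g⁻¹ * ·) e : (1:G) = h)).symm
  have d23 : h ≠ g * h := by
    intro e
    have : (1:G) = g := by simpa [mul_assoc] using congrArg (· * h⁻¹) e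
    exact hgne1 this.symm
  -- adjacency of 1 with each
  have adj1 : ∀ x : G, x ≠ 1 → (powerGraph G).Adj 1 x := by
    intro x hx
    exact ⟨Ne.symm hx, Or.inl ⟨orderOf x, orderOf_pos x, pow_orderOf_eq_one x⟩⟩
  have nadj : ∀ x y : G, x ∉ zpowers y → y ∉ zpowers x → ¬ (powerGraph G).Adj x y := by
    intro x y hx hy hadj
    rcases mem_zpowers_of_adj hadj with hc | hc
    · exact hx hc
    · exact hy hc
  -- transfer to line graph
  exact lineGraph_no_claw Γ (φ 1) (φ g) (φ h) (φ (g * h))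
    (φ.map_adj_iff.2 (adj1 g hgne1)) (φ.map_adj_iff.2 (adj1 h hne1))
    (φ.map_adj_iff.2 (adj1 (g*h) hghne1))
    (fun a => nadj g h m2 m1 (φ.map_adj_iff.1 a))
    (fun a => nadj g (g*h) m5 m3 (φ.map_adj_iff.1 a))
    (fun a => nadj h (g*h) m6 m4 (φ.map_adj_iff.1 a))
    (fun e => d12 (φ.injective e)) (fun e => d13 (φ.injective e)) (fun e => d23 (φ.injective e))
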